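/- The multiplication tensor of A₃ = ℂ[x,y,z]/(x²,y²,z²) degenerates to the Coppersmith–Winograd tensor T_{CW,6}: acting on the 8-dimensional space by the diagonal matrices with entries t on the basis elements x, y, z, xyz and 1 on 1, xy, xz, yz (appropriately on each of the three tensor factors, with inverse scaling of the corresponding coefficients), and letting t → 0, the multiplication tensor of A₃ converges to T_{CW,6}. In particular T_{CW,6} lies in the closure of the GL₈×GL₈×GL₈-orbit of the multiplication tensor of A₃. -/

import Mathlib

open Filter

/-- Index of the monomial basis x^a y^b z^c (a,b,c ∈ {0,1}) of ℂ[x,y,z]/(x²,y²,z²). -/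
abbrev ι17 := Fin 2 × Fin 2 × Fin 2

/-- The multiplication tensor of A₃ = ℂ[x,y,z]/(x²,y²,z²) in the monomial basis:
the product of two basis monomials is a basis monomial when no exponent overflows,
and 0 otherwise. -/
noncomputable def TA3 (u v w : ι17) : ℂ :=
  if (u.1 : ℕ) + (v.1 : ℕ) = (w.1 : ℕ) ∧ (u.2.1 : ℕ) + (v.2.1 : ℕ) = (w.2.1 : ℕ)
      ∧ (u.2.2 : ℕ) + (v.2.2 : ℕ) = (w.2.2 : ℕ) then 1 else 0

/-- Parity of the degree of a basis monomial: 1 on x, y, z, xyz and 0 on 1, xy, xz, yz. -/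
def deg17 (u : ι17) : ℕ := ((u.1 : ℕ) + (u.2.1 : ℕ) + (u.2.2 : ℕ)) % 2

/-- The Coppersmith–Winograd tensor T_{CW,6} on the same 8-dimensional space (in the
form where the six degree-one basis vectors multiply in complementary pairs into the
socle element xyz; cf. the matrix representation in the paper). -/
noncomputable def TCW6 (u v w : ι17) : ℂ :=
  if u = ((0, 0, 0) : ι17) then (if v = w then 1 else 0)
  else if v = ((0, 0, 0) : ι17) then (if u = w then 1 else 0)
  else if (u.1 : ℕ) + (v.1 : ℕ) = 1 ∧ (u.2.1 : ℕ) + (v.2.1 : ℕ) = 1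
      ∧ (u.2.2 : ℕ) + (v.2.2 : ℕ) = 1 ∧ w = ((1, 1, 1) : ι17) then 1 else 0

/-- The decidable condition appearing in `TA3`. -/
def Pc17 (u v w : ι17) : Prop :=
  (u.1 : ℕ) + (v.1 : ℕ) = (w.1 : ℕ) ∧ (u.2.1 : ℕ) + (v.2.1 : ℕ) = (w.2.1 : ℕ)
      ∧ (u.2.2 : ℕ) + (v.2.2 : ℕ) = (w.2.2 : ℕ)

/-- The decidable condition characterizing where `TCW6` equals 1. -/
def Qc17 (u v w : ι17) : Prop :=
  (u = ((0,0,0) : ι17) ∧ v = w) ∨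
  (u ≠ ((0,0,0) : ι17) ∧ v = ((0,0,0) : ι17) ∧ u = w) ∨
  (u ≠ ((0,0,0) : ι17) ∧ v ≠ ((0,0,0) : ι17) ∧
    (u.1 : ℕ) + (v.1 : ℕ) = 1 ∧ (u.2.1 : ℕ) + (v.2.1 : ℕ) = 1
      ∧ (u.2.2 : ℕ) + (v.2.2 : ℕ) = 1 ∧ w = ((1, 1, 1) : ι17))

instance (u v w : ι17) : Decidable (Pc17 u v w) := by unfold Pc17; infer_instance
instance (u v w : ι17) : Decidable (Qc17 u v w) := by unfold Qc17; infer_instance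

lemma TA3_eq17 (u v w : ι17) : TA3 u v w = if Pc17 u v w then 1 else 0 := rfl

lemma TCW6_eq17 (u v w : ι17) : TCW6 u v w = if Qc17 u v w then 1 else 0 := by
  unfold TCW6 Qc17
  split_ifs with h1 h2 h3 h4 h5 h6 h7 h8 h9 <;> first | rfl | tauto | exact (if_pos (by assumption)).symm | exact (if_neg (by assumption)).symm

lemma fact1_17 : ∀ u v w : ι17, Qc17 u v w → Pc17 u v w := by decide
lemma fact2_17 : ∀ u v w : ι17, Pc17 u v w →
    (Qc17 u v w ↔ deg17 u + deg17 v = deg17 w) := by decide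
lemma fact3_17 : ∀ u v w : ι17, Pc17 u v w → ¬ Qc17 u v w →
    deg17 u + deg17 v = 2 ∧ deg17 w = 0 := by decide

lemma key17 (p : ι17 × ι17 × ι17) {t : ℂ} (ht : t ≠ 0) :
    t ^ (deg17 p.1 + deg17 p.2.1) * (t ^ deg17 p.2.2)⁻¹ * TA3 p.1 p.2.1 p.2.2
      = TCW6 p.1 p.2.1 p.2.2 + t ^ 2 * (TA3 p.1 p.2.1 p.2.2 - TCW6 p.1 p.2.1 p.2.2) := by
  obtain ⟨u, v, w⟩ := p
  simp only [TA3_eq17, TCW6_eq17]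
  by_cases hP : Pc17 u v w
  · by_cases hQ : Qc17 u v w
    · have hd := (fact2_17 u v w hP).1 hQ
      simp only [hP, hQ, if_true, hd]
      field_simp
      ring
    · obtain ⟨h2, h0⟩ := fact3_17 u v w hP hQ
      simp only [hP, hQ, if_true, if_false, h2, h0]
      field_simp
      ring
  · have hQ : ¬ Qc17 u v w := fun h => hP (fact1_17 u v w h)
    simp [hP, hQ]

lemma main17 :
    Tendsto
      (fun t : ℂ => fun p : ι17 × ι17 × ι17 =>
        t ^ (deg17 p.1 + deg17 p.2.1) * (t ^ deg17 p.2.2)⁻¹ * TA3 p.1 p.2.1 p.2.2)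
      (nhdsWithin 0 {0}ᶜ)
      (nhds (fun p : ι17 × ι17 × ι17 => TCW6 p.1 p.2.1 p.2.2)) := by
  have hE : (fun t : ℂ => fun p : ι17 × ι17 × ι17 =>
        t ^ (deg17 p.1 + deg17 p.2.1) * (t ^ deg17 p.2.2)⁻¹ * TA3 p.1 p.2.1 p.2.2)
      =ᶠ[nhdsWithin 0 {0}ᶜ]
      (fun t : ℂ => fun p : ι17 × ι17 × ι17 =>
        TCW6 p.1 p.2.1 p.2.2 + t ^ 2 * (TA3 p.1 p.2.1 p.2.2 - TCW6 p.1 p.2.1 p.2.2)) := by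
    filter_upwards [self_mem_nhdsWithin] with t ht
    funext p
    exact key17 p ht
  have hT : Tendsto
      (fun t : ℂ => fun p : ι17 × ι17 × ι17 =>
        TCW6 p.1 p.2.1 p.2.2 + t ^ 2 * (TA3 p.1 p.2.1 p.2.2 - TCW6 p.1 p.2.1 p.2.2))
      (nhdsWithin 0 {0}ᶜ)
      (nhds (fun p : ι17 × ι17 × ι17 => TCW6 p.1 p.2.1 p.2.2)) := by
    rw [tendsto_pi_nhds]
    intro p
    have h2 : Tendsto (fun t : ℂ => t ^ 2) (nhdsWithin 0 {0}ᶜ) (nhds 0) := by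
      simpa using ((continuous_pow 2).tendsto (0 : ℂ)).mono_left
        (nhdsWithin_le_nhds (s := {0}ᶜ))
    simpa using tendsto_const_nhds.add (h2.mul_const
      (TA3 p.1 p.2.1 p.2.2 - TCW6 p.1 p.2.1 p.2.2))
  exact hT.congr' hE.symm

lemma isUnit_det_diag17 {n : Type} [Fintype n] [DecidableEq n] (d : n → ℂ)
    (hd : ∀ u, d u ≠ 0) : IsUnit (Matrix.diagonal d).det := by
  rw [Matrix.det_diagonal, isUnit_iff_ne_zero]
  exact Finset.prod_ne_zero_iff.2 fun u _ => hd u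

lemma diag17 (t : ℂ) (p : ι17 × ι17 × ι17) :
    t ^ (deg17 p.1 + deg17 p.2.1) * (t ^ deg17 p.2.2)⁻¹ * TA3 p.1 p.2.1 p.2.2
      = ∑ u : ι17, ∑ v : ι17, ∑ w : ι17,
          Matrix.diagonal (fun u : ι17 => t ^ deg17 u) p.1 u *
          Matrix.diagonal (fun u : ι17 => t ^ deg17 u) p.2.1 v *
          Matrix.diagonal (fun u : ι17 => (t ^ deg17 u)⁻¹) p.2.2 w * TA3 u v w := by
  simp only [Matrix.diagonal_apply, ite_mul, zero_mul, mul_ite, mul_zero,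
    Finset.sum_ite_eq, Finset.mem_univ, if_true]
  rw [pow_add]

lemma mem17 (t : ℂ) (ht : t ≠ 0) :
    (fun p : ι17 × ι17 × ι17 =>
        t ^ (deg17 p.1 + deg17 p.2.1) * (t ^ deg17 p.2.2)⁻¹ * TA3 p.1 p.2.1 p.2.2) ∈
      {S : ι17 × ι17 × ι17 → ℂ |
        ∃ g₁ g₂ g₃ : Matrix ι17 ι17 ℂ,
          IsUnit g₁.det ∧ IsUnit g₂.det ∧ IsUnit g₃.det ∧
          S = fun p => ∑ u : ι17, ∑ v : ι17, ∑ w : ι17,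
            g₁ p.1 u * g₂ p.2.1 v * g₃ p.2.2 w * TA3 u v w} :=
  ⟨Matrix.diagonal (fun u => t ^ deg17 u), Matrix.diagonal (fun u => t ^ deg17 u),
    Matrix.diagonal (fun u => (t ^ deg17 u)⁻¹),
    isUnit_det_diag17 _ (fun _ => pow_ne_zero _ ht),
    isUnit_det_diag17 _ (fun _ => pow_ne_zero _ ht),
    isUnit_det_diag17 _ (fun _ => inv_ne_zero (pow_ne_zero _ ht)),
    funext fun p => diag17 t p⟩


/-- Scaling the basis vectors x, y, z, xyz by t (and inversely on the third factor)
and letting t → 0, the multiplication tensor of A₃ converges to T_{CW,6}; in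
particular T_{CW,6} lies in the closure of the GL₈×GL₈×GL₈-orbit of the
multiplication tensor of A₃. -/
theorem stmt17 :
    Tendsto
      (fun t : ℂ => fun p : ι17 × ι17 × ι17 =>
        t ^ (deg17 p.1 + deg17 p.2.1) * (t ^ deg17 p.2.2)⁻¹ * TA3 p.1 p.2.1 p.2.2)
      (nhdsWithin 0 {0}ᶜ)
      (nhds (fun p : ι17 × ι17 × ι17 => TCW6 p.1 p.2.1 p.2.2)) ∧
    (fun p : ι17 × ι17 × ι17 => TCW6 p.1 p.2.1 p.2.2) ∈
      closure {S : ι17 × ι17 × ι17 → ℂ |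
        ∃ g₁ g₂ g₃ : Matrix ι17 ι17 ℂ,
          IsUnit g₁.det ∧ IsUnit g₂.det ∧ IsUnit g₃.det ∧
          S = fun p => ∑ u : ι17, ∑ v : ι17, ∑ w : ι17,
            g₁ p.1 u * g₂ p.2.1 v * g₃ p.2.2 w * TA3 u v w} := by
  refine ⟨main17, ?_⟩
  refine mem_closure_of_tendsto main17 ?_
  filter_upwards [self_mem_nhdsWithin] with t ht using mem17 t ht
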